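/- Let d ≥ 3, q ≥ 2 and define h(w,t) = (cos t + √((q−1)w/(q+w))·sin t)^d + (q−1)·(cos t − √(w/((q−1)(q+w)))·sin t)^d. Then for every fixed t ∈ (0, π/2), the function w ↦ h(w,t) is strictly increasing on (0,∞). -/

import Mathlib

open Real

theorem stmt_18 (d : ℕ) (hd : 3 ≤ d) (q : ℝ) (hq : 2 ≤ q) (t : ℝ)
    (ht : t ∈ Set.Ioo 0 (π / 2)) :
    StrictMonoOn (fun w : ℝ =>
      (cos t + Real.sqrt ((q - 1) * w / (q + w)) * sin t) ^ d +
        (q - 1) * (cos t - Real.sqrt (w / ((q - 1) * (q + w))) * sin t) ^ d)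
      (Set.Ioi 0) := by
  obtain ⟨ht0, ht2⟩ := ht
  have hpi := Real.pi_pos
  have hc : 0 < Real.cos t := Real.cos_pos_of_mem_Ioo ⟨by linarith, ht2⟩
  have hsin : 0 < Real.sin t := Real.sin_pos_of_pos_of_lt_pi ht0 (by linarith)
  have ha1 : (1:ℝ) ≤ q - 1 := by linarith
  have ha0 : (0:ℝ) < q - 1 := by linarith
  have hq0 : (0:ℝ) < q := by linarith
  set c := Real.cos t with hcdef
  set σ := Real.sin t with hsdef
  set a := q - 1 with ha
  set g : ℝ → ℝ := fun s => (c + s * σ) ^ d + a * (c - s * σ / a) ^ d with hg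
  have hd0 : (0:ℝ) < (d:ℝ) := by
    have : 0 < d := by omega
    exact_mod_cast this
  have key : ∀ x y : ℝ, |x| < y → x ^ (d - 1) < y ^ (d - 1) := by
    intro x y hxy
    calc x ^ (d - 1) ≤ |x| ^ (d - 1) := by
          rw [← abs_pow]; exact le_abs_self _
      _ < y ^ (d - 1) := pow_lt_pow_left₀ hxy (abs_nonneg x) (by omega)
  have hgmono : StrictMonoOn g (Set.Ici 0) := by
    apply strictMonoOn_of_deriv_pos (convex_Ici 0)
    · fun_prop
    · intro s hs
      rw [interior_Ici] at hs
      have hs0 : 0 < s := hs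
      have h1 : HasDerivAt (fun s : ℝ => (c + s * σ) ^ d)
          ((d : ℝ) * (c + s * σ) ^ (d - 1) * σ) s := by
        have hb : HasDerivAt (fun s : ℝ => c + s * σ) σ s := by
          simpa using ((hasDerivAt_id s).mul_const σ).const_add c
        simpa using hb.fun_pow d
      have h2 : HasDerivAt (fun s : ℝ => a * (c - s * σ / a) ^ d)
          (a * ((d : ℝ) * (c - s * σ / a) ^ (d - 1) * (-(σ / a)))) s := by
        have hb : HasDerivAt (fun s : ℝ => c - s * σ / a) (-(σ / a)) s := by
          have hb' : HasDerivAt (fun s : ℝ => c - s * (σ / a)) (-(1 * (σ / a))) s :=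
            ((hasDerivAt_id s).mul_const (σ / a)).const_sub c
          have : (fun s : ℝ => c - s * (σ / a)) = fun s : ℝ => c - s * σ / a := by
            funext x; ring
          rw [this] at hb'
          simpa using hb'
        simpa using (hb.pow d).const_mul a
      have hD : HasDerivAt g
          ((d : ℝ) * (c + s * σ) ^ (d - 1) * σ +
            a * ((d : ℝ) * (c - s * σ / a) ^ (d - 1) * (-(σ / a)))) s := h1.add h2
      rw [hD.deriv]
      have hxy : |c - s * σ / a| < c + s * σ := by
        have hss : 0 < s * σ := mul_pos hs0 hsin
        have h1' : s * σ / a ≤ s * σ := div_le_self (le_of_lt hss) ha1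
        have h2' : 0 < s * σ / a := div_pos hss ha0
        rw [abs_lt]
        constructor <;> nlinarith
      have hpow := key _ _ hxy
      have hrw : (d : ℝ) * (c + s * σ) ^ (d - 1) * σ +
          a * ((d : ℝ) * (c - s * σ / a) ^ (d - 1) * (-(σ / a))) =
          (d : ℝ) * σ * ((c + s * σ) ^ (d - 1) - (c - s * σ / a) ^ (d - 1)) := by
        field_simp
        ring
      rw [hrw]
      exact mul_pos (mul_pos hd0 hsin) (sub_pos.mpr hpow)
  have hrw : ∀ w : ℝ, 0 < w →
      (c + Real.sqrt ((q - 1) * w / (q + w)) * σ) ^ d +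
        (q - 1) * (c - Real.sqrt (w / ((q - 1) * (q + w))) * σ) ^ d =
      g (Real.sqrt ((q - 1) * w / (q + w))) := by
    intro w hw
    have hqw : 0 < q + w := by linarith
    have hsq : Real.sqrt ((q - 1) * w / (q + w)) =
        (q - 1) * Real.sqrt (w / ((q - 1) * (q + w))) := by
      rw [show (q - 1) * w / (q + w) = (q - 1) ^ 2 * (w / ((q - 1) * (q + w))) by
        field_simp]
      rw [Real.sqrt_mul (sq_nonneg _), Real.sqrt_sq (le_of_lt ha0)]
    simp only [hg]
    rw [hsq]
    have : (q - 1) * Real.sqrt (w / ((q - 1) * (q + w))) * σ / a =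
        Real.sqrt (w / ((q - 1) * (q + w))) * σ := by
      rw [ha, mul_assoc, mul_div_cancel_left₀ _ (by linarith : q - 1 ≠ 0)]
    rw [this]
  intro w1 hw1 w2 hw2 h12
  have hw1' : (0:ℝ) < w1 := hw1
  have hw2' : (0:ℝ) < w2 := hw2
  dsimp only
  rw [hrw w1 hw1', hrw w2 hw2']
  apply hgmono (Set.mem_Ici.mpr (Real.sqrt_nonneg _)) (Set.mem_Ici.mpr (Real.sqrt_nonneg _))
  apply Real.sqrt_lt_sqrt
  · positivity
  · rw [div_lt_div_iff₀ (by linarith) (by linarith)]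
    nlinarith [mul_lt_mul_of_pos_left h12 (mul_pos ha0 hq0)]
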